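/- Induction step of the proof of Proposition 1: let D be a dictionary and s a nonempty list. Suppose s = s₁ ++ r, where s₁ is a prefix of s belonging to D of maximal length among all prefixes of s belonging to D, and suppose s also decomposes as s = s₁* ++ r*, where s₁* ∈ D is the first block of an S-optimal covering of s of size n + 1 (so r* has a covering by D of size n). Then r is a suffix of r*, and therefore the minimal covering size of r by D is at most n. -/

import Mathlib

/-- A dictionary over the alphabet `α`: a set of nonempty lists containing all
single-letter lists and closed under nonempty contiguous subsequences (infixes). -/
def IsDictionary {α : Type*} (D : Set (List α)) : Prop :=
  (∀ a : α, [a] ∈ D) ∧ (∀ t ∈ D, t ≠ []) ∧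
  (∀ t ∈ D, ∀ u : List α, u ≠ [] → u <:+: t → u ∈ D)

/-- `L` is a covering of `s` by `D`: every block of `L` belongs to `D`
and the concatenation of the blocks equals `s`. -/
def IsCovering {α : Type*} (D : Set (List α)) (L : List (List α)) (s : List α) : Prop :=
  (∀ b ∈ L, b ∈ D) ∧ L.flatten = s

/-- The minimal number of blocks of a covering of `s` by `D`. -/
noncomputable def minCover {α : Type*} (D : Set (List α)) (s : List α) : ℕ :=
  sInf {n | ∃ L, IsCovering D L s ∧ L.length = n}

/-- The covering similarity `𝒮(s,S) = (|s| - k + 1)/|s|` where `k` is the minimal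
covering size of `s` by the dictionary `D`. -/
noncomputable def covSim {α : Type*} (D : Set (List α)) (s : List α) : ℝ :=
  ((s.length : ℝ) - (minCover D s : ℝ) + 1) / (s.length : ℝ)

lemma cover_of_suffix {α : Type*} (D : Set (List α)) (hD : IsDictionary D) :
    ∀ L : List (List α), ∀ r : List α, (∀ b ∈ L, b ∈ D) → r <:+ L.flatten →
    ∃ L', IsCovering D L' r ∧ L'.length ≤ L.length := by
  intro L
  induction L with
  | nil =>
    intro r _ hr
    simp only [List.flatten_nil] at hr
    have : r = [] := List.suffix_nil.mp hr
    subst this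
    exact ⟨[], ⟨by simp, rfl⟩, le_refl _⟩
  | cons b L ih =>
    intro r hb hr
    obtain ⟨t, ht⟩ := hr
    rw [List.flatten_cons] at ht
    rcases List.append_eq_append_iff.mp ht with ⟨a', hba, hra⟩ | ⟨c', _, hFc⟩
    · -- r = a' ++ L.flatten, a' a suffix of b
      rcases eq_or_ne a' [] with h0 | h0
      · subst h0
        simp only [List.nil_append] at hra
        obtain ⟨L', hL', hlen⟩ := ih L.flatten (fun x hx => hb x (List.mem_cons_of_mem _ hx))
          (List.suffix_refl _)
        exact ⟨L', hra ▸ hL', hlen.trans (Nat.le_succ _)⟩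
      · have haD : a' ∈ D := hD.2.2 b (hb b List.mem_cons_self) a' h0
          (List.IsSuffix.isInfix ⟨t, hba.symm⟩)
        refine ⟨a' :: L, ⟨?_, ?_⟩, ?_⟩
        · intro x hx
          rcases List.mem_cons.mp hx with h | h
          · exact h ▸ haD
          · exact hb x (List.mem_cons_of_mem _ h)
        · rw [List.flatten_cons, hra]
        · simp
    · -- L.flatten = c' ++ r
      obtain ⟨L', hL', hlen⟩ := ih r (fun x hx => hb x (List.mem_cons_of_mem _ hx)) ⟨c', hFc.symm⟩
      exact ⟨L', hL', hlen.trans (Nat.le_succ _)⟩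

/-- Induction step of the proof of Proposition 1: let `s = s₁ ++ r` where `s₁` is a
maximal-length prefix of `s` belonging to `D`, and let `s = s₁' ++ r'` where
`s₁' ∈ D` is the first block of an S-optimal covering of `s` of size `n + 1`
(so `r'` has a covering by `D` of size `n`). Then `r` is a suffix of `r'` and the
minimal covering size of `r` by `D` is at most `n`. -/
theorem greedy_induction_step {α : Type*} (D : Set (List α)) (hD : IsDictionary D)
    (s s₁ r s₁' r' : List α) (hs : s ≠ [])
    (h₁ : s₁ ++ r = s) (h₁D : s₁ ∈ D)
    (hmax : ∀ p ∈ D, p <+: s → p.length ≤ s₁.length)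
    (h₂ : s₁' ++ r' = s) (h₂D : s₁' ∈ D) (n : ℕ)
    (hopt : ∃ L : List (List α), IsCovering D L r' ∧ L.length = n) :
    r <:+ r' ∧ minCover D r ≤ n := by
  have hlen : s₁'.length ≤ s₁.length := hmax s₁' h₂D ⟨r', h₂⟩
  have heq : s₁ ++ r = s₁' ++ r' := h₁.trans h₂.symm
  have hsuf : r <:+ r' := by
    rcases List.append_eq_append_iff.mp heq with ⟨a', hba, hra⟩ | ⟨c', _, hFc⟩
    · have : a'.length = 0 := by
        have := congrArg List.length hba
        simp at this; omega
      rw [List.length_eq_zero_iff] at this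
      subst this
      simp only [List.nil_append] at hra
      exact hra ▸ List.suffix_refl _
    · exact ⟨c', hFc.symm⟩
  refine ⟨hsuf, ?_⟩
  obtain ⟨L, hL, hLn⟩ := hopt
  obtain ⟨L', hL', hlen'⟩ := cover_of_suffix D hD L r hL.1 (hL.2.symm ▸ hsuf)
  calc minCover D r ≤ L'.length := Nat.sInf_le ⟨L', hL', rfl⟩
    _ ≤ n := hLn ▸ hlen'
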